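/- In a maximin election with weighted voters, if W is any set of (possibly top-truncated) manipulator ballots each ranking candidate p first, and W together with the fixed non-manipulator profile S makes p a co-winner, then replacing every ballot in W with the top-truncated ballot (p) (ranking only p, leaving all others unranked and tied below p) also makes p a co-winner. Consequently, p can be made a maximin co-winner by some manipulator ballots iff all manipulators voting (p) makes p a co-winner. -/

import Mathlib

variable {C : Type*}

/-- Whether the top-truncated ballot `l` (given by its ranked prefix, a duplicate-free
list) prefers `c` to `c'`: `c` must be ranked, and `c'` is either unranked or ranked later. -/
def prefB [DecidableEq C] (l : List C) (c c' : C) : Bool :=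
  decide (c ∈ l) && (!(decide (c' ∈ l)) || decide (l.idxOf c < l.idxOf c'))

/-- Weighted pairwise support: total weight of ballots in `P` preferring `c` to `c'`. -/
def pairN [DecidableEq C] (P : List (ℕ × List C)) (c c' : C) : ℕ :=
  (P.map (fun wb => if prefB wb.2 c c' then wb.1 else 0)).sum

/-- Maximin score of `c` (in `ℕ∞`): the minimum over all other candidates `c'`
of the weight preferring `c` to `c'`. -/
noncomputable def maximinScore [Fintype C] [DecidableEq C] (P : List (ℕ × List C)) (c : C) : ℕ∞ :=
  (Finset.univ.erase c).inf (fun c' => (pairN P c c' : ℕ∞))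

/-- `p` is a maximin co-winner of the weighted profile `P`. -/
def MaximinCoWinner [Fintype C] [DecidableEq C] (P : List (ℕ × List C)) (p : C) : Prop :=
  ∀ c, maximinScore P c ≤ maximinScore P p

lemma pairN_append [DecidableEq C] (A B : List (ℕ × List C)) (c c' : C) :
    pairN (A ++ B) c c' = pairN A c c' + pairN B c c' := by
  simp [pairN]

lemma pairN_rep_ne [DecidableEq C] {p c : C} (hc : c ≠ p) (W : List (ℕ × List C)) (c' : C) :
    pairN (W.map fun wb => (wb.1, [p])) c c' = 0 := by
  induction W with
  | nil => simp [pairN]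
  | cons a t ih =>
    simp only [List.map_cons, pairN, List.sum_cons] at ih ⊢
    rw [ih]
    simp [prefB, hc]

lemma pairN_rep_p [DecidableEq C] {p c' : C} (hc : c' ≠ p) (W : List (ℕ × List C)) :
    pairN (W.map fun wb => (wb.1, [p])) p c' = (W.map Prod.fst).sum := by
  induction W with
  | nil => simp [pairN]
  | cons a t ih =>
    simp only [List.map_cons, pairN, List.sum_cons] at ih ⊢
    rw [ih]
    simp [prefB, hc]

lemma pairN_le_sum [DecidableEq C] (P : List (ℕ × List C)) (c c' : C) :
    pairN P c c' ≤ (P.map Prod.fst).sum := by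
  induction P with
  | nil => simp [pairN]
  | cons a t ih =>
    simp only [pairN, List.map_cons, List.sum_cons] at ih ⊢
    gcongr
    split <;> simp

lemma core [Fintype C] [DecidableEq C] (p : C) (S W W' : List (ℕ × List C))
    (hw : W'.map Prod.fst = W.map Prod.fst)
    (h : MaximinCoWinner (S ++ W') p) :
    MaximinCoWinner (S ++ W.map (fun wb => (wb.1, [p]))) p := by
  intro c
  by_cases hc : c = p
  · subst hc; exact le_refl _
  · have h1 : maximinScore (S ++ W.map (fun wb => (wb.1, [p]))) c ≤
        maximinScore (S ++ W') c := by
      apply Finset.inf_mono_fun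
      intro b _
      rw [pairN_append, pairN_append, pairN_rep_ne hc]
      exact_mod_cast Nat.le_add_right _ _ |>.trans (by gcongr <;> simp)
    have h2 : maximinScore (S ++ W') p ≤
        maximinScore (S ++ W.map (fun wb => (wb.1, [p]))) p := by
      apply Finset.inf_mono_fun
      intro b hb
      have hb' : b ≠ p := (Finset.mem_erase.mp hb).1
      rw [pairN_append, pairN_append, pairN_rep_p hb']
      have := pairN_le_sum W' p b
      rw [hw] at this
      exact_mod_cast Nat.add_le_add_left this _ |>.trans_eq (by omega) |>.trans
        (Nat.le_of_eq rfl)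
    exact h1.trans ((h c).trans h2)

theorem maximin_toptruncated [Fintype C] [DecidableEq C] (p : C)
    (S W : List (ℕ × List C))
    (hW : ∀ wb ∈ W, wb.2.Nodup ∧ wb.2.head? = some p) :
    (MaximinCoWinner (S ++ W) p →
      MaximinCoWinner (S ++ W.map (fun wb => (wb.1, [p]))) p) ∧
    ((∃ W' : List (ℕ × List C), W'.map Prod.fst = W.map Prod.fst ∧
        (∀ wb ∈ W', wb.2.Nodup) ∧ MaximinCoWinner (S ++ W') p) ↔
      MaximinCoWinner (S ++ W.map (fun wb => (wb.1, [p]))) p) := by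
  refine ⟨fun h => core p S W W rfl h, ⟨fun ⟨W', h1, _, h3⟩ => core p S W W' h1 h3, fun h => ?_⟩⟩
  exact ⟨W.map (fun wb => (wb.1, [p])), by simp, fun wb hwb => by
    obtain ⟨a, -, rfl⟩ := List.mem_map.mp hwb
    simp, h⟩
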